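/- For every complex number z with Re z < 0, the integral ∫₀^∞ e^{z r} log r dr over the half-line converges and equals (γ + Log(−z))/z, where γ is the Euler–Mascheroni constant and Log is the principal branch of the complex logarithm. -/

import Mathlib

open MeasureTheory Complex

section HadamardAux
open MeasureTheory Set Real Filter Metric

-- Step 1: the classic integral
lemma key1 : ∫ t in Ioi (0:ℝ), Real.exp (-t) * Real.log t = -Real.eulerMascheroniConstant := by
  have h1 := Complex.hasDerivAt_GammaIntegral (s := 1) (by norm_num)
  have heq : (∫ t : ℝ in Ioi 0, (t:ℂ) ^ ((1:ℂ) - 1) * (Real.log t * Real.exp (-t)))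
      = ((∫ t in Ioi (0:ℝ), Real.exp (-t) * Real.log t : ℝ) : ℂ) := by
    have hco : ∀ r : ℝ, Complex.ofReal r = @RCLike.ofReal ℂ _ r := fun r => rfl
    rw [hco, ← _root_.integral_ofReal]
    refine setIntegral_congr_fun measurableSet_Ioi (fun t ht => ?_)
    rw [sub_self, Complex.cpow_zero, one_mul]
    simp only [RCLike.ofReal_mul]
    norm_num [mul_comm]
  rw [heq] at h1
  have h2 : HasDerivAt Complex.Gamma
      ((∫ t in Ioi (0:ℝ), Real.exp (-t) * Real.log t : ℝ) : ℂ) 1 := by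
    refine h1.congr_of_eventuallyEq ?_
    have : {s : ℂ | 0 < s.re} ∈ nhds (1:ℂ) := by
      refine (isOpen_Ioi.preimage Complex.continuous_re).mem_nhds (by norm_num)
    filter_upwards [this] with s hs
    exact Complex.Gamma_eq_integral hs
  have h3 := h2.real_of_complex
  have h4 := Real.hasDerivAt_Gamma_one
  have := h4.unique h3
  simpa using this.symm

lemma expRpow {a s : ℝ} (ha : 0 < a) (hs : 0 < s) :
    IntegrableOn (fun x : ℝ => Real.exp (-(a*x)) * x^(s-1)) (Ioi 0) := by
  have h := Real.GammaIntegral_convergent hs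
  have h2 : IntegrableOn (fun x : ℝ => Real.exp (-(a*x)) * (a*x)^(s-1)) (Ioi 0) := by
    have := (integrableOn_Ioi_comp_mul_left_iff
      (fun x => Real.exp (-x) * x^(s-1)) 0 ha).mpr (by simpa using h)
    simpa using this
  have h3 := h2.const_mul (a^(1-s))
  have hone : a^(1-s) * a^(s-1) = 1 := by
    rw [← Real.rpow_add ha]; norm_num
  refine IntegrableOn.congr_fun h3 (fun x hx => ?_) measurableSet_Ioi
  rw [mem_Ioi] at hx
  rw [Real.mul_rpow ha.le hx.le,
    show a^(1-s) * (Real.exp (-(a*x)) * (a^(s-1) * x^(s-1)))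
      = (a^(1-s) * a^(s-1)) * (Real.exp (-(a*x)) * x^(s-1)) from by ring, hone, one_mul]

-- |log r| ≤ 2 * r^(-1/2) + r for r > 0
lemma abs_log_le {r : ℝ} (hr : 0 < r) : |Real.log r| ≤ 2 * r^(-(1/2):ℝ) + r := by
  rcases le_or_gt r 1 with h | h
  · rw [_root_.abs_of_nonpos (Real.log_nonpos hr.le h)]
    have h1 : Real.log (r^(-(1/2):ℝ)) ≤ r^(-(1/2):ℝ) :=
      (Real.log_le_sub_one_of_pos (Real.rpow_pos_of_pos hr _)).trans (by linarith)
    rw [Real.log_rpow hr] at h1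
    nlinarith [Real.rpow_pos_of_pos hr (-(1/2):ℝ)]
  · rw [_root_.abs_of_nonneg (Real.log_nonneg h.le)]
    have := Real.log_le_sub_one_of_pos hr
    have := Real.rpow_pos_of_pos hr (-(1/2):ℝ)
    nlinarith

lemma int_aux {a : ℝ} (ha : 0 < a) {p : ℝ} (hp : 1 ≤ p) :
    IntegrableOn (fun r : ℝ => Real.exp (-(a*r)) * r^(p-1) * |Real.log r|) (Ioi 0) := by
  have hb : IntegrableOn
      (fun r : ℝ => Real.exp (-(a*r)) * (2 * r^((p-1/2)-1) + r^((p+1)-1))) (Ioi 0) := by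
    simp_rw [mul_add]
    exact (IntegrableOn.congr_fun ((expRpow ha (by linarith : (0:ℝ) < p - 1/2)).const_mul 2)
      (fun x _ => by ring) measurableSet_Ioi).add (expRpow ha (by linarith))
  refine Integrable.mono' hb ?_ ?_
  · refine ContinuousOn.aestronglyMeasurable ?_ measurableSet_Ioi
    refine (((Real.continuous_exp.comp (continuous_const.mul continuous_id).neg).continuousOn.mul
      (continuousOn_id.rpow_const (fun x hx => Or.inl (ne_of_gt hx)))).mul
      ((Real.continuousOn_log.mono (fun x (hx : x ∈ Ioi 0) => ne_of_gt hx)).abs))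
  · filter_upwards [ae_restrict_mem measurableSet_Ioi] with r hr
    rw [mem_Ioi] at hr
    have h1 : |Real.log r| ≤ 2 * r^(-(1/2):ℝ) + r := abs_log_le hr
    have he := Real.exp_pos (-(a*r))
    have hrp := Real.rpow_pos_of_pos hr (p-1)
    rw [norm_of_nonneg (by positivity)]
    have e1 : r^(p-1) * r^(-(1/2):ℝ) = r^((p-1/2)-1) := by
      rw [← Real.rpow_add hr]; ring_nf
    have e2 : r^(p-1) * r = r^((p+1)-1) := by
      rw [← Real.rpow_add_one hr.ne']; ring_nf
    have hle : Real.exp (-(a*r)) * r^(p-1) * |Real.log r|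
        ≤ Real.exp (-(a*r)) * r^(p-1) * (2 * r^(-(1/2):ℝ) + r) :=
      mul_le_mul_of_nonneg_left h1 (by positivity)
    refine hle.trans (le_of_eq ?_)
    rw [← e1, ← e2]; ring


noncomputable def F (z : ℂ) : ℂ := ∫ r in Ioi (0:ℝ), Complex.exp (z*r) * Real.log r

lemma aesm_cexp_log (z : ℂ) :
    AEStronglyMeasurable (fun r : ℝ => Complex.exp (z*r) * Real.log r)
      (volume.restrict (Ioi 0)) := by
  refine ContinuousOn.aestronglyMeasurable ?_ measurableSet_Ioi
  exact (Complex.continuous_exp.comp (continuous_const.mul Complex.continuous_ofReal)).continuousOn.mul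
    (Complex.continuous_ofReal.comp_continuousOn
      (Real.continuousOn_log.mono (fun x (hx : x ∈ Ioi 0) => ne_of_gt hx)))

lemma aesm_mul_cexp_log (z : ℂ) :
    AEStronglyMeasurable (fun r : ℝ => (r:ℂ) * Complex.exp (z*r) * Real.log r)
      (volume.restrict (Ioi 0)) := by
  refine ContinuousOn.aestronglyMeasurable ?_ measurableSet_Ioi
  exact ((Complex.continuous_ofReal.mul (Complex.continuous_exp.comp
      (continuous_const.mul Complex.continuous_ofReal))).continuousOn).mul
    (Complex.continuous_ofReal.comp_continuousOn
      (Real.continuousOn_log.mono (fun x (hx : x ∈ Ioi 0) => ne_of_gt hx)))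

lemma norm_cexp_log {z : ℂ} (r : ℝ) (hr : 0 < r) :
    ‖Complex.exp (z*r) * Real.log r‖ = Real.exp (z.re*r) * |Real.log r| := by
  rw [norm_mul, Complex.norm_exp, Complex.norm_real,
    Real.norm_eq_abs]
  congr 2
  simp [Complex.mul_re]

lemma intF {z : ℂ} (hz : z.re < 0) :
    IntegrableOn (fun r : ℝ => Complex.exp (z*r) * Real.log r) (Ioi 0) := by
  have ha : (0:ℝ) < -z.re := by linarith
  refine Integrable.mono' (int_aux ha (le_refl (1:ℝ))) (aesm_cexp_log z) ?_
  filter_upwards [ae_restrict_mem measurableSet_Ioi] with r hr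
  rw [mem_Ioi] at hr
  rw [norm_cexp_log r hr, sub_self, Real.rpow_zero, mul_one, neg_mul, neg_neg]

lemma hasDerivF {z₀ : ℂ} (hz : z₀.re < 0) :
    HasDerivAt F (∫ r in Ioi (0:ℝ), (r:ℂ) * Complex.exp (z₀*r) * Real.log r) z₀ := by
  set a : ℝ := -z₀.re/2 with ha_def
  have ha : 0 < a := by simp [ha_def]; linarith
  refine (hasDerivAt_integral_of_dominated_loc_of_deriv_le (s := ball z₀ a) (bound := fun r =>
      Real.exp (-(a*r)) * r^((2:ℝ)-1) * |Real.log r|)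
      (μ := volume.restrict (Ioi 0)) (x₀ := z₀)
      (F := fun z (r : ℝ) => Complex.exp (z*r) * Real.log r)
      (F' := fun z (r : ℝ) => (r:ℂ) * Complex.exp (z*r) * Real.log r) (ball_mem_nhds z₀ ha)
      ?_ (intF hz) (aesm_mul_cexp_log z₀) ?_ (int_aux ha (by norm_num)) ?_).2
  · exact Filter.Eventually.of_forall (fun z => aesm_cexp_log z)
  · filter_upwards [ae_restrict_mem measurableSet_Ioi] with r hr z hzb
    rw [mem_Ioi] at hr
    have hre : z.re ≤ -a := by
      have h1 : |(z - z₀).re| ≤ ‖z - z₀‖ := Complex.abs_re_le_norm _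
      rw [mem_ball, Complex.dist_eq] at hzb
      have h2 := (abs_le.mp (h1.trans hzb.le)).2
      rw [Complex.sub_re] at h2
      have hz2 : z₀.re = -(2*a) := by rw [ha_def]; ring
      linarith
    rw [norm_mul, norm_mul, Complex.norm_real,
      Complex.norm_exp, Complex.norm_real, Real.norm_eq_abs, Real.norm_eq_abs,
      _root_.abs_of_nonneg hr.le]
    have hexp : Real.exp ((z * r).re) ≤ Real.exp (-(a*r)) := by
      apply Real.exp_le_exp.mpr
      have : (z * (r:ℂ)).re = z.re * r := by simp [Complex.mul_re]
      rw [this]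
      nlinarith
    have h2 : r * Real.exp ((z * r).re) ≤ r^((2:ℝ)-1) * Real.exp (-(a*r)) := by
      rw [show ((2:ℝ)-1) = 1 by norm_num, Real.rpow_one]
      exact mul_le_mul_of_nonneg_left hexp hr.le
    calc r * Real.exp ((z * ↑r).re) * |Real.log r|
        ≤ r^((2:ℝ)-1) * Real.exp (-(a*r)) * |Real.log r| :=
          mul_le_mul_of_nonneg_right h2 (abs_nonneg _)
      _ = Real.exp (-(a*r)) * r^((2:ℝ)-1) * |Real.log r| := by ring
  · filter_upwards [ae_restrict_mem measurableSet_Ioi] with r hr z hzb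
    have h : HasDerivAt (fun w : ℂ => Complex.exp (w * r) * (Real.log r : ℂ))
        (Complex.exp (z * r) * r * Real.log r) z :=
      (hasDerivAt_mul_const (r:ℂ)).cexp.mul_const _
    rw [show (r:ℂ) * Complex.exp (z * r) * Real.log r = Complex.exp (z * r) * r * Real.log r by ring]
    exact h


lemma int_real {a : ℝ} (ha : 0 < a) :
    IntegrableOn (fun r : ℝ => Real.exp (-(a*r)) * Real.log r) (Ioi 0) := by
  refine Integrable.mono' (int_aux ha (le_refl (1:ℝ))) ?_ ?_
  · refine ContinuousOn.aestronglyMeasurable ?_ measurableSet_Ioi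
    exact (Real.continuous_exp.comp (continuous_const.mul continuous_id).neg).continuousOn.mul
      (Real.continuousOn_log.mono (fun x (hx : x ∈ Ioi 0) => ne_of_gt hx))
  · filter_upwards [ae_restrict_mem measurableSet_Ioi] with r hr
    rw [mem_Ioi] at hr
    rw [Real.norm_eq_abs, abs_mul, _root_.abs_of_nonneg (Real.exp_pos _).le,
      sub_self, Real.rpow_zero, mul_one]

lemma real_val {a : ℝ} (ha : 0 < a) :
    ∫ r in Ioi (0:ℝ), Real.exp (-(a*r)) * Real.log r
      = (-Real.eulerMascheroniConstant - Real.log a) / a := by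
  have hg : ∀ r ∈ Ioi (0:ℝ), Real.exp (-(a*r)) * Real.log r
      = (fun t => Real.exp (-t) * Real.log t - Real.exp (-t) * Real.log a) (a*r) := by
    intro r hr
    rw [mem_Ioi] at hr
    simp only
    rw [Real.log_mul ha.ne' hr.ne']
    ring
  rw [setIntegral_congr_fun measurableSet_Ioi hg,
    integral_comp_mul_left_Ioi (fun t => Real.exp (-t) * Real.log t - Real.exp (-t) * Real.log a) 0 ha,
    mul_zero]
  have hi1 : IntegrableOn (fun t : ℝ => Real.exp (-t) * Real.log t) (Ioi 0) := by
    have := int_real (a := 1) one_pos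
    simpa using this
  have hi2 : IntegrableOn (fun t : ℝ => Real.exp (-t) * Real.log a) (Ioi 0) := by
    have h := (exp_neg_integrableOn_Ioi 0 (b := 1) one_pos).mul_const (Real.log a)
    refine IntegrableOn.congr_fun h (fun x _ => by norm_num) measurableSet_Ioi
  rw [integral_sub hi1 hi2, key1, integral_mul_const, integral_exp_neg_Ioi_zero]
  rw [smul_eq_mul]
  field_simp

noncomputable def G (z : ℂ) : ℂ :=
  ((Real.eulerMascheroniConstant : ℂ) + Complex.log (-z)) / z

lemma FG_real {t : ℝ} (ht : t < 0) : F (t:ℂ) = G (t:ℂ) := by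
  have hco : ∀ r : ℝ, Complex.ofReal r = @RCLike.ofReal ℂ _ r := fun r => rfl
  have h1 : F (t:ℂ) = ((∫ r in Ioi (0:ℝ), Real.exp (-((-t)*r)) * Real.log r : ℝ) : ℂ) := by
    rw [F]
    conv_rhs => rw [hco, ← _root_.integral_ofReal]
    refine setIntegral_congr_fun measurableSet_Ioi (fun r hr => ?_)
    rw [← hco]
    push_cast
    rw [← Complex.ofReal_mul, ← Complex.ofReal_exp]
    norm_num
  rw [h1, real_val (by linarith : (0:ℝ) < -t)]
  rw [G]
  have h2 : Complex.log (-(t:ℂ)) = ((Real.log (-t) : ℝ) : ℂ) := by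
    rw [show (-(t:ℂ)) = (((-t : ℝ)) : ℂ) by push_cast; ring,
      Complex.ofReal_log (by linarith : (0:ℝ) ≤ -t)]
  rw [h2]
  rw [show ((Real.eulerMascheroniConstant : ℂ) + ((Real.log (-t) : ℝ) : ℂ))
      = (((Real.eulerMascheroniConstant + Real.log (-t) : ℝ)) : ℂ) by push_cast; ring]
  rw [show ((t:ℂ)) = (((t:ℝ)):ℂ) from rfl, ← Complex.ofReal_div, Complex.ofReal_inj]
  field_simp
  ring

lemma FG {z : ℂ} (hz : z.re < 0) : F z = G z := by
  set U : Set ℂ := {w : ℂ | w.re < 0} with hU_def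
  have hUo : IsOpen U := isOpen_lt Complex.continuous_re continuous_const
  have hFa : AnalyticOnNhd ℂ F U := by
    refine DifferentiableOn.analyticOnNhd (fun w hw => ?_) hUo
    exact ((hasDerivF hw).differentiableAt).differentiableWithinAt
  have hGa : AnalyticOnNhd ℂ G U := by
    refine DifferentiableOn.analyticOnNhd (fun w hw => ?_) hUo
    have hw0 : w ≠ 0 := by rintro rfl; simp [hU_def] at hw
    have hwl : (-w) ∈ Complex.slitPlane := by
      rw [Complex.mem_slitPlane_iff]
      left; simpa [hU_def] using hw
    exact (((differentiableAt_const _).add ((Complex.differentiableAt_log hwl).comp w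
      differentiable_neg.differentiableAt)).div differentiableAt_id hw0).differentiableWithinAt
  have hpre : IsPreconnected U := (convex_halfSpace_re_lt 0).isPreconnected
  have hmem : (-1 : ℂ) ∈ U := by simp [hU_def]
  have hfreq : ∃ᶠ w in nhdsWithin (-1 : ℂ) {(-1 : ℂ)}ᶜ, F w = G w := by
    have htend : Filter.Tendsto (fun t : ℝ => (t:ℂ))
        (nhdsWithin (-1 : ℝ) {(-1 : ℝ)}ᶜ) (nhdsWithin (-1 : ℂ) {(-1 : ℂ)}ᶜ) := by
      have : Filter.Tendsto (fun t : ℝ => (t:ℂ)) (nhdsWithin (-1 : ℝ) {(-1 : ℝ)}ᶜ)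
          (nhdsWithin ((-1 : ℝ) : ℂ) {(-1 : ℂ)}ᶜ) := by
        refine ContinuousWithinAt.tendsto_nhdsWithin
          Complex.continuous_ofReal.continuousWithinAt ?_
        intro t ht hmem
        exact ht (by
          simp only [Set.mem_singleton_iff] at hmem ⊢
          exact_mod_cast hmem)
      simpa using this
    refine htend.frequently ?_
    have hev : ∀ᶠ t in nhdsWithin (-1 : ℝ) {(-1 : ℝ)}ᶜ, t < 0 := by
      refine Filter.Eventually.filter_mono nhdsWithin_le_nhds ?_
      exact Filter.Tendsto.eventually_lt_const (by norm_num) Filter.tendsto_id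
    refine (hev.mono (fun t ht => FG_real ht)).frequently
  exact hFa.eqOn_of_preconnected_of_frequently_eq hGa hpre hmem hfreq hz

end HadamardAux

/-- For every complex `z` with `Re z < 0`, the integral `∫₀^∞ e^{z r} log r dr`
converges and equals `(γ + Log(−z))/z`. -/
theorem stmt1 (z : ℂ) (hz : z.re < 0) :
    IntegrableOn (fun r : ℝ => Complex.exp (z * r) * Real.log r) (Set.Ioi 0) volume ∧
    ∫ r in Set.Ioi (0 : ℝ), Complex.exp (z * r) * Real.log r =
      ((Real.eulerMascheroniConstant : ℂ) + Complex.log (-z)) / z := by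
  refine ⟨intF hz, ?_⟩
  have h := FG hz
  unfold F G at h
  exact h
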